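/- The biased Shamir-type (k,n) construction is ideal but non-perfect for 1/t^k < p < 1/t: R_∞(V_i) = R_∞(S) for all i, yet there exists a set F of k−1 indices with H(S|V_F) < H(S). Moreover, as p ranges over [1/t^k, 1], the value R := R_∞(S) = −log((p t^k + (1−p)t^{k−1} − 1)/(t^k−1)) attains every value in [0, log t]. -/

import Mathlib

open Finset Real Filter

/-- `P` is a probability mass function on the finite set `α`. -/
def IsPMF {α : Type*} [Fintype α] (P : α → ℝ) : Prop :=
  (∀ x, 0 ≤ P x) ∧ ∑ x, P x = 1

/-- Min-entropy `R_∞(X) = - log max_x P(x)`. -/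
noncomputable def minEnt {α : Type*} [Fintype α] [Nonempty α] (P : α → ℝ) : ℝ :=
  - Real.log (⨆ x, P x)

/-- Rényi entropy of order `a`: `R_a(X) = (1/(1-a)) log Σ_x P(x)^a`. -/
noncomputable def renyiEnt {α : Type*} [Fintype α] (a : ℝ) (P : α → ℝ) : ℝ :=
  (1 / (1 - a)) * Real.log (∑ x, P x ^ a)

/-- Marginal on the first component of a joint distribution. -/
noncomputable def margX {α β : Type*} [Fintype α] [Fintype β] (P : α × β → ℝ) : α → ℝ :=
  fun x => ∑ y, P (x, y)

/-- Marginal on the second component of a joint distribution. -/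
noncomputable def margY {α β : Type*} [Fintype α] [Fintype β] (P : α × β → ℝ) : β → ℝ :=
  fun y => ∑ x, P (x, y)

/-- Average conditional min-entropy
`R_∞(X|Y) = - log Σ_y P_Y(y) max_x P_{X|Y}(x|y)`. -/
noncomputable def condMinEnt {α β : Type*} [Fintype α] [Fintype β] [Nonempty α]
    (P : α × β → ℝ) : ℝ :=
  - Real.log (∑ y, margY P y * ⨆ x, P (x, y) / margY P y)

/-- Arimoto's conditional Rényi entropy of order `a`:
`R_a(X|Y) = (a/(1-a)) log Σ_y P_Y(y) (Σ_x P_{X|Y}(x|y)^a)^(1/a)`. -/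
noncomputable def condRenyiEnt {α β : Type*} [Fintype α] [Fintype β]
    (a : ℝ) (P : α × β → ℝ) : ℝ :=
  (a / (1 - a)) *
    Real.log (∑ y, margY P y * (∑ x, (P (x, y) / margY P y) ^ a) ^ (1 / a))

/-- Shannon entropy `H(X) = - Σ_x P(x) log P(x)`. -/
noncomputable def shannonEnt {α : Type*} [Fintype α] (P : α → ℝ) : ℝ :=
  ∑ x, Real.negMulLog (P x)

/-- Conditional Shannon entropy `H(X|Y) = H(XY) - H(Y)`. -/
noncomputable def condShannonEnt {α β : Type*} [Fintype α] [Fintype β]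
    (P : α × β → ℝ) : ℝ :=
  shannonEnt P - shannonEnt (margY P)

/-- Distribution of the random variable `X : Ω → α` under the pmf `μ` on `Ω`. -/
noncomputable def dist {Ω α : Type*} [Fintype Ω] [DecidableEq α]
    (μ : Ω → ℝ) (X : Ω → α) : α → ℝ :=
  fun x => ∑ ω, if X ω = x then μ ω else 0

/-- The Shamir-type sharing map `φ : F_t^k → F_t^{n+1}` sending
`(s, r_1, …, r_{k-1})` to `(s, v_1, …, v_n)` with
`v_i = s + Σ_{ℓ=1}^{k-1} x_i^ℓ r_ℓ`. -/
def shamirShare (K : Type*) [Field K] (k n : ℕ) (x : Fin n → K)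
    (sr : K × (Fin (k - 1) → K)) : K × (Fin n → K) :=
  (sr.1, fun i => sr.1 + ∑ ℓ : Fin (k - 1), x i ^ ((ℓ : ℕ) + 1) * sr.2 ℓ)

/-- The distribution table `DT_{(k,n)}`, i.e. the image of `shamirShare`. -/
noncomputable def DT (K : Type*) [Field K] [Fintype K] [DecidableEq K]
    (k n : ℕ) (x : Fin n → K) : Finset (K × (Fin n → K)) :=
  Finset.univ.image (shamirShare K k n x)

/-- The biased joint pmf of `(S, V_1, …, V_n)`: probability `p` on the
all-zero tuple, `(1-p)/(t^k - 1)` on every other tuple of `DT_{(k,n)}`, and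
`0` outside `DT_{(k,n)}`, where `t = |K|`. -/
noncomputable def muShamir (K : Type*) [Field K] [Fintype K] [DecidableEq K]
    (k n : ℕ) (x : Fin n → K) (p : ℝ) : K × (Fin n → K) → ℝ :=
  fun sv =>
    if sv = ((0 : K), fun _ => (0 : K)) then p
    else if sv ∈ DT K k n x then
      (1 - p) / ((Fintype.card K : ℝ) ^ k - 1)
    else 0


lemma shannonEnt_eq {γ : Type*} [Fintype γ] (Q : γ → ℝ) :
    shannonEnt Q = - ∑ c, Q c * Real.log (Q c) := by
  simp [shannonEnt, Real.negMulLog, Finset.sum_neg_distrib]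

lemma keyLe {a b : ℝ} (ha : 0 < a) (hb : 0 < b) :
    a - b ≤ a * Real.log a - a * Real.log b := by
  have h := Real.log_le_sub_one_of_pos (div_pos hb ha)
  rw [Real.log_div hb.ne' ha.ne'] at h
  have h2 : a * (Real.log b - Real.log a) ≤ a * (b / a - 1) :=
    mul_le_mul_of_nonneg_left h ha.le
  have h3 : a * (b / a - 1) = b - a := by field_simp
  rw [h3, mul_sub] at h2; linarith

lemma keyLt {a b : ℝ} (ha : 0 < a) (hb : 0 < b) (hab : a ≠ b) :
    a - b < a * Real.log a - a * Real.log b := by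
  have hba : b / a ≠ 1 := fun h => hab (by field_simp at h; linarith)
  have h := Real.log_lt_sub_one_of_pos (div_pos hb ha) hba
  rw [Real.log_div hb.ne' ha.ne'] at h
  have h2 : a * (Real.log b - Real.log a) < a * (b / a - 1) :=
    mul_lt_mul_of_pos_left h ha
  have h3 : a * (b / a - 1) = b - a := by field_simp
  rw [h3, mul_sub] at h2; linarith

lemma gibbs {α β : Type*} [Fintype α] [Fintype β] [Nonempty α] [Nonempty β]
    (P : α × β → ℝ) (hpos : ∀ z, 0 < P z) (hsum : ∑ z, P z = 1)
    (z₀ : α × β) (hdep : P z₀ ≠ margX P z₀.1 * margY P z₀.2) :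
    shannonEnt P < shannonEnt (margX P) + shannonEnt (margY P) := by
  have hmx : ∀ a, 0 < margX P a := fun a =>
    Finset.sum_pos (fun y _ => hpos _) univ_nonempty
  have hmy : ∀ b, 0 < margY P b := fun b =>
    Finset.sum_pos (fun x _ => hpos _) univ_nonempty
  have hsx : ∑ a, margX P a = 1 := by
    rw [← hsum]; simp only [Fintype.sum_prod_type]; rfl
  have hsy : ∑ b, margY P b = 1 := by
    rw [← hsum]; simp only [Fintype.sum_prod_type]
    exact Finset.sum_comm.symm
  set g : α × β → ℝ := fun z => margX P z.1 * margY P z.2 with hg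
  have hgpos : ∀ z, 0 < g z := fun z => mul_pos (hmx _) (hmy _)
  have hlt : ∑ z, (P z - g z) < ∑ z, (P z * Real.log (P z) - P z * Real.log (g z)) := by
    refine Finset.sum_lt_sum (fun z _ => keyLe (hpos z) (hgpos z)) ⟨z₀, mem_univ _, ?_⟩
    exact keyLt (hpos z₀) (hgpos z₀) hdep
  have hsg : ∑ z, g z = 1 := by
    simp only [hg, Fintype.sum_prod_type, ← Finset.sum_mul_sum]
    rw [hsx, hsy]; norm_num
  have hL : ∑ z, (P z - g z) = 0 := by
    rw [Finset.sum_sub_distrib, hsum, hsg]; ring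
  have hlog : ∀ z, P z * Real.log (g z)
      = P z * Real.log (margX P z.1) + P z * Real.log (margY P z.2) := by
    intro z
    rw [hg]
    rw [Real.log_mul (hmx _).ne' (hmy _).ne', mul_add]
  have hR1 : ∑ z : α × β, P z * Real.log (margX P z.1)
      = ∑ a, margX P a * Real.log (margX P a) := by
    simp only [Fintype.sum_prod_type]
    exact Finset.sum_congr rfl fun a _ => by rw [← Finset.sum_mul]; rfl
  have hR2 : ∑ z : α × β, P z * Real.log (margY P z.2)
      = ∑ b, margY P b * Real.log (margY P b) := by
    simp only [Fintype.sum_prod_type]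
    rw [Finset.sum_comm]
    exact Finset.sum_congr rfl fun b _ => by rw [← Finset.sum_mul]; rfl
  have hR : ∑ z, (P z * Real.log (P z) - P z * Real.log (g z))
      = - shannonEnt P + shannonEnt (margX P) + shannonEnt (margY P) := by
    rw [Finset.sum_sub_distrib]
    simp only [hlog]
    rw [Finset.sum_add_distrib, hR1, hR2, shannonEnt_eq P, shannonEnt_eq (margX P),
      shannonEnt_eq (margY P)]
    ring
  rw [hL, hR] at hlt; linarith

lemma psi_bijective (K : Type*) [Field K] [Fintype K] [DecidableEq K]
    (k n : ℕ) (hkn' : k - 1 ≤ n) (x : Fin n → K) (hx : Function.Injective x)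
    (hx0 : ∀ i, x i ≠ 0) (F : Finset (Fin n))
    (hF : F = Finset.univ.map (Fin.castLEEmb hkn')) :
    Function.Bijective (fun u : K × (Fin (k - 1) → K) =>
      ((u.1, fun j : F => u.1 + ∑ ℓ : Fin (k - 1), x (j : Fin n) ^ ((ℓ : ℕ) + 1) * u.2 ℓ) :
        K × (F → K))) := by
  classical
  set M : Matrix (Fin (k - 1)) (Fin (k - 1)) K :=
    Matrix.of fun i ℓ => x (Fin.castLE hkn' i) ^ ((ℓ : ℕ) + 1) with hM
  have hdet : M.det ≠ 0 := by
    have hM2 : M = Matrix.of (fun i ℓ => x (Fin.castLE hkn' i) *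
        Matrix.vandermonde (fun i => x (Fin.castLE hkn' i)) i ℓ) := by
      ext i ℓ
      simp only [hM, Matrix.of_apply, Matrix.vandermonde]
      ring
    rw [hM2, Matrix.det_mul_column]
    refine mul_ne_zero (Finset.prod_ne_zero_iff.2 fun i _ => hx0 _) ?_
    exact Matrix.det_vandermonde_ne_zero_iff.2 (hx.comp (Fin.castLE_injective hkn'))
  have hMinj : Function.Injective M.mulVec :=
    Matrix.mulVec_injective_iff_isUnit.mpr ((Matrix.isUnit_iff_isUnit_det M).mpr
      (Ne.isUnit hdet))
  have hinj : Function.Injective (fun u : K × (Fin (k - 1) → K) =>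
      ((u.1, fun j : F => u.1 + ∑ ℓ : Fin (k - 1), x (j : Fin n) ^ ((ℓ : ℕ) + 1) * u.2 ℓ) :
        K × (F → K))) := by
    intro u v h
    simp only [Prod.mk.injEq] at h
    obtain ⟨h1, h2f⟩ := h
    have h2 : M.mulVec u.2 = M.mulVec v.2 := by
      funext i
      have hmem : Fin.castLE hkn' i ∈ F := by
        rw [hF]; simpa using Finset.mem_map_of_mem (Fin.castLEEmb hkn') (Finset.mem_univ i)
      have h3 := congrFun h2f ⟨Fin.castLE hkn' i, hmem⟩
      simp only at h3
      have h4 : ∑ ℓ : Fin (k - 1), x (Fin.castLE hkn' i) ^ ((ℓ : ℕ) + 1) * u.2 ℓ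
          = ∑ ℓ : Fin (k - 1), x (Fin.castLE hkn' i) ^ ((ℓ : ℕ) + 1) * v.2 ℓ := by
        rw [h1] at h3; linear_combination h3
      simpa [M, Matrix.mulVec, dotProduct] using h4
    have h5 : u.2 = v.2 := hMinj h2
    exact Prod.ext h1 h5
  refine (Fintype.bijective_iff_injective_and_card _).2 ⟨hinj, ?_⟩
  have hcF : F.card = k - 1 := by
    rw [hF, Finset.card_map, Finset.card_univ, Fintype.card_fin]
  simp [Fintype.card_prod, Fintype.card_fun, Fintype.card_coe, hcF]

lemma claim3 (T : ℝ) (hT : 1 < T) (k : ℕ) (hk : 1 ≤ k) (R : ℝ) (h0 : 0 ≤ R)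
    (h1 : R ≤ Real.log T) :
    ∃ q : ℝ, 1 / T ^ k ≤ q ∧ q ≤ 1 ∧
      - Real.log ((q * T ^ k + (1 - q) * T ^ (k - 1) - 1) / (T ^ k - 1)) = R := by
  have hTpos : (0:ℝ) < T := by linarith
  have hkk : T ^ k = T ^ (k - 1) * T := by
    rw [← pow_succ]; congr 1; omega
  have hTk1pos : (0:ℝ) < T ^ (k - 1) := by positivity
  have hone : (1:ℝ) ≤ T ^ (k - 1) := one_le_pow₀ hT.le
  have hA : (0:ℝ) < T ^ k - 1 := by nlinarith
  have hB : (0:ℝ) < T ^ k - T ^ (k - 1) := by nlinarith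
  set e : ℝ := Real.exp (-R) with he
  have he0 : 0 < e := Real.exp_pos _
  have he1 : e ≤ 1 := Real.exp_le_one_iff.2 (by linarith)
  have heT : 1 / T ≤ e := by
    have : Real.exp (-Real.log T) ≤ e := Real.exp_le_exp.2 (by linarith)
    rwa [Real.exp_neg, Real.exp_log hTpos, inv_eq_one_div] at this
  have hTe : 1 ≤ e * T := by
    rw [div_le_iff₀ hTpos] at heT; linarith
  set q : ℝ := (e * (T ^ k - 1) - T ^ (k - 1) + 1) / (T ^ k - T ^ (k - 1)) with hq
  have hqB : q * (T ^ k - T ^ (k - 1)) = e * (T ^ k - 1) - T ^ (k - 1) + 1 :=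
    div_mul_cancel₀ _ hB.ne'
  have hkey : q * T ^ k + (1 - q) * T ^ (k - 1) - 1 = e * (T ^ k - 1) := by
    linear_combination hqB
  refine ⟨q, ?_, ?_, ?_⟩
  · have h2 : 0 ≤ (e * T - 1) * ((T ^ (k - 1) * T - 1) * T ^ (k - 1)) :=
      mul_nonneg (by linarith) (mul_nonneg (by nlinarith) hTk1pos.le)
    rw [div_le_div_iff₀ (by positivity) hB, hkk]
    nlinarith [h2]
  · rw [hq, div_le_one hB]
    nlinarith
  · rw [hkey, mul_div_assoc, div_self hA.ne', mul_one, he, Real.log_exp, neg_neg]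

lemma zero_mem_DT (K : Type*) [Field K] [Fintype K] [DecidableEq K]
    (k n : ℕ) (x : Fin n → K) :
    ((0 : K), fun _ => (0 : K)) ∈ DT K k n x := by
  refine Finset.mem_image.2 ⟨(0, fun _ => 0), Finset.mem_univ _, ?_⟩
  simp [shamirShare]

lemma dist_muShamir (K : Type*) [Field K] [Fintype K] [DecidableEq K]
    (k n : ℕ) (x : Fin n → K) (p : ℝ)
    (hsh : Function.Injective (shamirShare K k n x))
    {α : Type*} [Fintype α] [DecidableEq α] (X : K × (Fin n → K) → α) (a : α) :
    dist (muShamir K k n x p) X a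
      = (1 - p) / ((Fintype.card K : ℝ) ^ k - 1) *
          ((Finset.univ.filter
            (fun u : K × (Fin (k - 1) → K) => X (shamirShare K k n x u) = a)).card : ℝ)
        + (if X ((0 : K), fun _ => (0 : K)) = a then
            p - (1 - p) / ((Fintype.card K : ℝ) ^ k - 1) else 0) := by
  classical
  set q : ℝ := (1 - p) / ((Fintype.card K : ℝ) ^ k - 1) with hq
  set z0 : K × (Fin n → K) := ((0 : K), fun _ => (0 : K)) with hz0
  have hmu : ∀ ω, muShamir K k n x p ω
      = (if ω ∈ DT K k n x then q else 0) + (if ω = z0 then p - q else 0) := by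
    intro ω
    by_cases hω : ω = z0
    · subst hω; simp [muShamir, zero_mem_DT, hz0]
    · by_cases hD : ω ∈ DT K k n x <;> simp [muShamir, hω, hD, hz0, hq, show ¬ω = ((0 : K), fun _ => (0 : K)) from hω]
  show (∑ ω, if X ω = a then muShamir K k n x p ω else 0) = _
  simp only [hmu]
  have hsplit : ∀ ω, (if X ω = a then
        (if ω ∈ DT K k n x then q else 0) + (if ω = z0 then p - q else 0) else 0)
      = (if X ω = a ∧ ω ∈ DT K k n x then q else 0)
        + (if ω = z0 then (if X z0 = a then p - q else 0) else 0) := by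
    intro ω
    by_cases h1 : X ω = a <;> by_cases h2 : ω ∈ DT K k n x <;>
      by_cases h3 : ω = z0 <;> subst_eqs <;> simp_all
  simp only [hsplit]
  rw [Finset.sum_add_distrib]
  congr 1
  · rw [Finset.sum_ite, Finset.sum_const, Finset.sum_const_zero, add_zero,
      nsmul_eq_mul, mul_comm]
    congr 2
    have h1 : Finset.univ.filter (fun ω => X ω = a ∧ ω ∈ DT K k n x)
        = (DT K k n x).filter (fun ω => X ω = a) := by
      ext ω; simp [and_comm]
    rw [h1, DT, Finset.filter_image, Finset.card_image_of_injective _ hsh]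
  · rw [Finset.sum_ite_eq' Finset.univ z0]
    simp

/-- for `1/t^k < p < 1/t` the biased Shamir-type `(k,n)`
construction is ideal (`R_∞(V_i) = R_∞(S)` for all `i`) yet non-perfect
(`H(S|V_F) < H(S)` for some `F` with `|F| = k - 1`); moreover, as `p` ranges
over `[1/t^k, 1]` the value `R = -log((p t^k + (1-p) t^{k-1} - 1)/(t^k - 1))`
attains every value in `[0, log t]`. -/
theorem shamir_ideal_non_perfect (K : Type*) [Field K] [Fintype K]
    [DecidableEq K]
    (k n : ℕ) (hk : 1 ≤ k) (hkn : k ≤ n) (hn : n < Fintype.card K)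
    (x : Fin n → K) (hx : Function.Injective x) (hx0 : ∀ i, x i ≠ 0)
    (p : ℝ) (hp : 1 / (Fintype.card K : ℝ) ^ k < p)
    (hp1 : p < 1 / (Fintype.card K : ℝ)) :
    (∀ i : Fin n,
      minEnt (dist (muShamir K k n x p) (fun sv => sv.2 i)) =
        minEnt (dist (muShamir K k n x p) Prod.fst)) ∧
    (∃ F : Finset (Fin n), F.card = k - 1 ∧
      condShannonEnt (dist (muShamir K k n x p)
          (fun sv => (sv.1, fun j : F => sv.2 j.1))) <
        shannonEnt (dist (muShamir K k n x p) Prod.fst)) ∧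
    (∀ R : ℝ, 0 ≤ R → R ≤ Real.log (Fintype.card K) →
      ∃ q : ℝ, 1 / (Fintype.card K : ℝ) ^ k ≤ q ∧ q ≤ 1 ∧
        - Real.log
          ((q * (Fintype.card K : ℝ) ^ k + (1 - q) * (Fintype.card K : ℝ) ^ (k - 1) - 1) /
            ((Fintype.card K : ℝ) ^ k - 1)) = R) := by
  classical
  have hcard2 : 2 ≤ Fintype.card K := by omega
  have hT1 : (1 : ℝ) < (Fintype.card K : ℝ) := by exact_mod_cast hcard2
  have hk2 : 2 ≤ k := by
    by_contra h
    have hk1 : k = 1 := by omega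
    rw [hk1, pow_one] at hp
    linarith
  have hkn' : k - 1 ≤ n := by omega
  have hTk : (1 : ℝ) < (Fintype.card K : ℝ) ^ k := one_lt_pow₀ hT1 (by omega)
  have hTk1 : (0 : ℝ) < (Fintype.card K : ℝ) ^ k - 1 := by linarith
  set q : ℝ := (1 - p) / ((Fintype.card K : ℝ) ^ k - 1) with hqdef
  have hp0 : (0 : ℝ) < p := lt_trans (by positivity) hp
  have hple : p < 1 := by
    have : 1 / (Fintype.card K : ℝ) < 1 := by
      rw [div_lt_one (by linarith)]; linarith
    linarith
  have hq0 : 0 < q := div_pos (by linarith) hTk1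
  have hpTk : 1 < p * (Fintype.card K : ℝ) ^ k := by
    rw [div_lt_iff₀ (by positivity)] at hp
    linarith
  have hqp : q < p := by
    rw [hqdef, div_lt_iff₀ hTk1]; nlinarith
  have hqTk : (Fintype.card K : ℝ) ^ k * q < 1 := by
    rw [hqdef, mul_div_assoc', div_lt_one hTk1]; nlinarith
  -- the special subset F and bijectivity of the pair map
  set F : Finset (Fin n) := Finset.univ.map (Fin.castLEEmb hkn') with hFdef
  have hFcard : F.card = k - 1 := by
    rw [hFdef, Finset.card_map, Finset.card_univ, Fintype.card_fin]
  have hψbij : Function.Bijective (fun u : K × (Fin (k - 1) → K) =>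
      ((u.1, fun j : F => u.1 + ∑ ℓ : Fin (k - 1), x (j : Fin n) ^ ((ℓ : ℕ) + 1) * u.2 ℓ) :
        K × (F → K))) := psi_bijective K k n hkn' x hx hx0 F hFdef
  have hbij : Function.Bijective (fun u : K × (Fin (k - 1) → K) =>
      (((shamirShare K k n x u).1,
        fun j : F => (shamirShare K k n x u).2 (j : Fin n)) : K × (F → K))) := hψbij
  have hsh : Function.Injective (shamirShare K k n x) := by
    intro u v h
    apply hbij.1
    show (((shamirShare K k n x u).1, fun j : F => (shamirShare K k n x u).2 (j : Fin n)) :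
      K × (F → K)) = _
    rw [h]
  -- counting lemmas
  have cS : ∀ a : K,
      ((Finset.univ.filter (fun u : K × (Fin (k - 1) → K) =>
        (shamirShare K k n x u).1 = a)).card) = Fintype.card K ^ (k - 1) := by
    intro a
    rw [← Fintype.card_subtype, show Fintype.card K ^ (k - 1) = Fintype.card (Fin (k - 1) → K)
      from by rw [Fintype.card_fun, Fintype.card_fin]]
    refine Fintype.card_congr ⟨fun u => u.1.2, fun r => ⟨(a, r), rfl⟩, ?_, fun r => rfl⟩
    rintro ⟨⟨s, r⟩, h⟩
    have h' : s = a := h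
    exact Subtype.ext (Prod.ext h'.symm rfl)
  have cV : ∀ (i : Fin n) (a : K),
      ((Finset.univ.filter (fun u : K × (Fin (k - 1) → K) =>
        (shamirShare K k n x u).2 i = a)).card) = Fintype.card K ^ (k - 1) := by
    intro i a
    rw [← Fintype.card_subtype, show Fintype.card K ^ (k - 1) = Fintype.card (Fin (k - 1) → K)
      from by rw [Fintype.card_fun, Fintype.card_fin]]
    refine Fintype.card_congr ⟨fun u => u.1.2,
      fun r => ⟨(a - ∑ ℓ : Fin (k - 1), x i ^ ((ℓ : ℕ) + 1) * r ℓ, r), ?_⟩, ?_, fun r => rfl⟩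
    · show a - (∑ ℓ : Fin (k - 1), x i ^ ((ℓ : ℕ) + 1) * r ℓ)
        + (∑ ℓ : Fin (k - 1), x i ^ ((ℓ : ℕ) + 1) * r ℓ) = a
      ring
    · rintro ⟨⟨s, r⟩, h⟩
      have h' : s + ∑ ℓ : Fin (k - 1), x i ^ ((ℓ : ℕ) + 1) * r ℓ = a := h
      refine Subtype.ext (Prod.ext ?_ rfl)
      show a - ∑ ℓ : Fin (k - 1), x i ^ ((ℓ : ℕ) + 1) * r ℓ = s
      rw [← h']; ring
  have c1 : ∀ w : K × (F → K),
      ((Finset.univ.filter (fun u : K × (Fin (k - 1) → K) =>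
        (((shamirShare K k n x u).1,
          fun j : F => (shamirShare K k n x u).2 (j : Fin n)) : K × (F → K)) = w)).card) = 1 := by
    intro w
    obtain ⟨u, hu⟩ := hbij.2 w
    rw [Finset.card_eq_one]
    refine ⟨u, ?_⟩
    ext v
    simp only [Finset.mem_filter, Finset.mem_univ, true_and, Finset.mem_singleton]
    constructor
    · intro hv
      exact hbij.1 (hv.trans hu.symm)
    · rintro rfl
      exact hu
  -- explicit distributions
  have hPS : dist (muShamir K k n x p) Prod.fst
      = fun s => q * (Fintype.card K : ℝ) ^ (k - 1) + (if (0 : K) = s then p - q else 0) := by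
    funext s
    rw [dist_muShamir K k n x p hsh Prod.fst s]
    rw [cS s]
    push_cast
    rfl
  have hPV : ∀ i : Fin n, dist (muShamir K k n x p) (fun sv => sv.2 i)
      = fun v => q * (Fintype.card K : ℝ) ^ (k - 1) + (if (0 : K) = v then p - q else 0) := by
    intro i
    funext v
    rw [dist_muShamir K k n x p hsh (fun sv => sv.2 i) v]
    rw [cV i v]
    push_cast
    rfl
  -- the joint distribution of (S, V_F)
  have hPJ : dist (muShamir K k n x p)
      (fun sv : K × (Fin n → K) => ((sv.1, fun j : F => sv.2 (j : Fin n)) : K × (F → K)))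
      = fun z => q + (if (((0 : K), fun _ => (0 : K)) : K × (F → K)) = z then p - q else 0) := by
    funext z
    rw [dist_muShamir K k n x p hsh
      (fun sv : K × (Fin n → K) => ((sv.1, fun j : F => sv.2 (j : Fin n)) : K × (F → K))) z]
    rw [c1 z]
    norm_num
    rfl
  set PJ : K × (F → K) → ℝ :=
    fun z => q + (if (((0 : K), fun _ => (0 : K)) : K × (F → K)) = z then p - q else 0)
    with hPJdef
  have hposPJ : ∀ z, 0 < PJ z := by
    intro z
    rw [hPJdef]
    dsimp only
    split_ifs <;> linarith
  have hpowk : (Fintype.card K : ℝ) ^ (k - 1) * (Fintype.card K : ℝ)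
      = (Fintype.card K : ℝ) ^ k := by
    rw [← pow_succ]; congr 1; omega
  have hcardFK : (Fintype.card (K × (F → K)) : ℝ) = (Fintype.card K : ℝ) ^ k := by
    have h2 : Fintype.card (K × (F → K)) = Fintype.card K ^ k := by
      rw [Fintype.card_prod, Fintype.card_fun, Fintype.card_coe, hFcard, ← pow_succ']
      congr 1; omega
    rw [h2]; push_cast; rfl
  have hq1 : ((Fintype.card K : ℝ) ^ k - 1) * q = 1 - p := by
    rw [hqdef]; field_simp
  have hsumPJ : ∑ z, PJ z = 1 := by
    rw [hPJdef]
    rw [Finset.sum_add_distrib, Finset.sum_const, Finset.sum_ite_eq Finset.univ]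
    simp only [Finset.mem_univ, if_true, Finset.card_univ, nsmul_eq_mul]
    rw [hcardFK]
    linarith
  have hmargX : margX PJ = fun s : K =>
      q * (Fintype.card K : ℝ) ^ (k - 1) + (if (0 : K) = s then p - q else 0) := by
    funext s
    show ∑ w : F → K, PJ (s, w) = _
    rw [hPJdef]
    simp only [Prod.mk.injEq, ite_and]
    rw [Finset.sum_add_distrib, Finset.sum_const, Finset.card_univ, nsmul_eq_mul]
    have h3 : ((Fintype.card (F → K) : ℝ)) = (Fintype.card K : ℝ) ^ (k - 1) := by
      rw [Fintype.card_fun, Fintype.card_coe, hFcard]; push_cast; rfl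
    rw [h3]
    by_cases h4 : (0 : K) = s
    · simp only [if_pos h4, Finset.sum_ite_eq Finset.univ, Finset.mem_univ, if_true]
      ring
    · simp only [if_neg h4, Finset.sum_const_zero]
      ring
  have hmargY : margY PJ = fun w : F → K =>
      (Fintype.card K : ℝ) * q + (if (fun _ => (0 : K) : F → K) = w then p - q else 0) := by
    funext w
    show ∑ s : K, PJ (s, w) = _
    rw [hPJdef]
    simp only [Prod.mk.injEq, ite_and]
    rw [Finset.sum_add_distrib, Finset.sum_const, Finset.card_univ, nsmul_eq_mul]
    rw [Finset.sum_ite_eq Finset.univ (0 : K)]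
    simp only [Finset.mem_univ, if_true]
  have hFne : ∃ j0 : Fin n, j0 ∈ F := by
    obtain ⟨j0, hj0⟩ := Finset.card_pos.mp (by omega : 0 < F.card)
    exact ⟨j0, hj0⟩
  obtain ⟨j0, hj0⟩ := hFne
  haveI : Nonempty {j // j ∈ F} := ⟨⟨j0, hj0⟩⟩
  have hwit : PJ ((1 : K), fun _ => (1 : K))
      ≠ margX PJ (1 : K) * margY PJ (fun _ => (1 : K)) := by
    have h5 : PJ ((1 : K), fun _ => (1 : K)) = q := by
      rw [hPJdef]
      dsimp only
      rw [if_neg, add_zero]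
      intro hcon
      exact one_ne_zero (congrArg Prod.fst hcon).symm
    have h6 : margX PJ (1 : K) = q * (Fintype.card K : ℝ) ^ (k - 1) := by
      rw [hmargX]
      dsimp only
      rw [if_neg (by exact fun hcon => one_ne_zero hcon.symm), add_zero]
    have h7 : margY PJ (fun _ => (1 : K)) = (Fintype.card K : ℝ) * q := by
      rw [hmargY]
      dsimp only
      rw [if_neg, add_zero]
      intro hcon
      exact one_ne_zero (congrFun hcon ⟨j0, hj0⟩).symm
    rw [h5, h6, h7]
    intro hcon
    have h8 : q * (Fintype.card K : ℝ) ^ (k - 1) * ((Fintype.card K : ℝ) * q)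
        = ((Fintype.card K : ℝ) ^ k * q) * q := by
      rw [← hpowk]; ring
    rw [h8] at hcon
    nlinarith [mul_lt_mul_of_pos_right hqTk hq0, hq0]
  have hG := gibbs PJ hposPJ hsumPJ ((1 : K), fun _ => (1 : K)) hwit
  refine ⟨?_, ⟨F, hFcard, ?_⟩, ?_⟩
  · intro i
    rw [hPV i, hPS]
  · have hEq : shannonEnt (margX PJ) = shannonEnt (dist (muShamir K k n x p) Prod.fst) := by
      rw [hmargX, hPS]
    calc condShannonEnt (dist (muShamir K k n x p)
          (fun sv => ((sv.1, fun j : F => sv.2 (j : Fin n)) : K × (F → K))))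
        = shannonEnt PJ - shannonEnt (margY PJ) := by rw [condShannonEnt, hPJ]
      _ < shannonEnt (margX PJ) := by linarith
      _ = shannonEnt (dist (muShamir K k n x p) Prod.fst) := hEq
  · intro R h0 h1
    exact claim3 (Fintype.card K : ℝ) hT1 k hk R h0 h1
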